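/- (Hardy inequality, case sp = 1.) If sp = 1, then there exists a constant C'' > 0, depending only on Ω, N, p and s, such that ∫_Ω |u(x)|^p / ρ(x)^{sp} dx ≤ C'' ∫_{ℝ^N}∫_{ℝ^N} |u(x)−u(y)|^p/|x−y|^{N+sp} dx dy for every u ∈ W^{s,p}_0(Ω). -/

import Mathlib

open MeasureTheory ENNReal Filter Topology Set

noncomputable section

/-- Euclidean space `ℝ^N`. -/
abbrev Euc (N : ℕ) := EuclideanSpace ℝ (Fin N)

/-- `Ω` is a bounded Lipschitz domain: a bounded open connected set whose boundary is
locally the graph of a Lipschitz function (in suitable rotated coordinates). -/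
def IsLipschitzDomain {N : ℕ} (Ω : Set (Euc N)) : Prop :=
  IsOpen Ω ∧ IsConnected Ω ∧ Bornology.IsBounded Ω ∧
  ∀ x ∈ frontier Ω, ∃ U : Set (Euc N), IsOpen U ∧ x ∈ U ∧
    ∃ (e : Euc N ≃ᵢ WithLp 2 (EuclideanSpace ℝ (Fin (N - 1)) × ℝ))
      (φ : EuclideanSpace ℝ (Fin (N - 1)) → ℝ) (L : NNReal),
      LipschitzWith L φ ∧
      ∀ y ∈ U, (y ∈ Ω ↔ φ ((WithLp.equiv 2 _) (e y)).1 < ((WithLp.equiv 2 _) (e y)).2)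

/-- The `p`-th power of the Gagliardo seminorm, as an extended nonnegative real. -/
def gagliardoE (N : ℕ) (s p : ℝ) (u : Euc N → ℝ) : ℝ≥0∞ :=
  ∫⁻ x, ∫⁻ y, ENNReal.ofReal (|u x - u y| ^ p / dist x y ^ ((N : ℝ) + s * p))

/-- The Gagliardo seminorm `‖u‖`. -/
def gagliardoNorm (N : ℕ) (s p : ℝ) (u : Euc N → ℝ) : ℝ :=
  (gagliardoE N s p u).toReal ^ (1 / p)

/-- Membership in `W^{s,p}_0(Ω)`: `u ∈ L^p(ℝ^N)`, finite Gagliardo seminorm,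
and `u = 0` a.e. on `ℝ^N ∖ Ω`. -/
def MemW0 (N : ℕ) (s p : ℝ) (Ω : Set (Euc N)) (u : Euc N → ℝ) : Prop :=
  MemLp u (ENNReal.ofReal p) (volume : Measure (Euc N)) ∧
  gagliardoE N s p u ≠ ⊤ ∧
  ∀ᵐ x ∂(volume : Measure (Euc N)), x ∉ Ω → u x = 0

/-- The critical exponent `p*_s = Np/(N−sp)` if `sp < N`, and `∞` otherwise. -/
def pStar (N : ℕ) (s p : ℝ) : ℝ≥0∞ :=
  if s * p < N then ENNReal.ofReal (N * p / (N - s * p)) else ⊤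

/-- `ρ(x) = dist(x, ∂Ω)`. -/
def rho {N : ℕ} (Ω : Set (Euc N)) (x : Euc N) : ℝ :=
  Metric.infDist x (frontier Ω)

/-- The `L^r(Ω)` norm `|u|_r`. -/
def lpNorm {N : ℕ} (Ω : Set (Euc N)) (r : ℝ) (u : Euc N → ℝ) : ℝ :=
  (∫ x in Ω, |u x| ^ r) ^ (1 / r)

/-- The class `B_q` with explicit exponents `a ∈ [0, q−1]`, `r ∈ (1,∞)`:
`h·ρ^{sa} ∈ L^r(Ω)` and `1/r + a/p + (q−a)/p*_s < 1`. -/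
def MemBWith (N : ℕ) (s p : ℝ) (Ω : Set (Euc N)) (q a r : ℝ) (h : Euc N → ℝ) : Prop :=
  0 ≤ a ∧ a ≤ q - 1 ∧ 1 < r ∧
  ENNReal.ofReal (1 / r + a / p) + ENNReal.ofReal (q - a) / pStar N s p < 1 ∧
  MemLp (fun x => h x * rho Ω x ^ (s * a)) (ENNReal.ofReal r)
    ((volume : Measure (Euc N)).restrict Ω)

/-- The class `B_q`. -/
def MemB (N : ℕ) (s p : ℝ) (Ω : Set (Euc N)) (q : ℝ) (h : Euc N → ℝ) : Prop :=
  ∃ a r : ℝ, MemBWith N s p Ω q a r h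

/-- The class `A_q`: `h ∈ L^r(Ω)` for some `r ∈ (1,∞)` with `1/r + q/p*_s < 1`. -/
def MemA (N : ℕ) (s p : ℝ) (Ω : Set (Euc N)) (q : ℝ) (h : Euc N → ℝ) : Prop :=
  ∃ r : ℝ, 1 < r ∧
    ENNReal.ofReal (1 / r) + ENNReal.ofReal q / pStar N s p < 1 ∧
    MemLp h (ENNReal.ofReal r) ((volume : Measure (Euc N)).restrict Ω)

/-- The class `B̃_q` (for `sp ≤ N`): `K·ρ^{sa} ∈ L^r(Ω)` for some `a ∈ [0, q−1]`,
`r ∈ (1,∞)` with `1/r + a/p + (q−1−a)/p*_s < sp/N`. -/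
def MemBTilde (N : ℕ) (s p : ℝ) (Ω : Set (Euc N)) (q : ℝ) (K : Euc N → ℝ) : Prop :=
  ∃ a r : ℝ, 0 ≤ a ∧ a ≤ q - 1 ∧ 1 < r ∧
    ENNReal.ofReal (1 / r + a / p) + ENNReal.ofReal (q - 1 - a) / pStar N s p
      < ENNReal.ofReal (s * p / N) ∧
    MemLp (fun x => K x * rho Ω x ^ (s * a)) (ENNReal.ofReal r)
      ((volume : Measure (Euc N)).restrict Ω)

/-- The class `B_t^q`: `K·ρ^{sa} ∈ L^r(Ω)` for some `a ∈ [0, t−1]`, `r ∈ (1,∞)`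
with `1/r + a/p + (t−a)/q ≤ 1`. -/
def MemBtq (N : ℕ) (s p : ℝ) (Ω : Set (Euc N)) (q t : ℝ) (K : Euc N → ℝ) : Prop :=
  ∃ a r : ℝ, 0 ≤ a ∧ a ≤ t - 1 ∧ 1 < r ∧
    1 / r + a / p + (t - a) / q ≤ 1 ∧
    MemLp (fun x => K x * rho Ω x ^ (s * a)) (ENNReal.ofReal r)
      ((volume : Measure (Euc N)).restrict Ω)

/-- The pairing `⟨A(u), v⟩` associated with the fractional `p`-Laplacian. -/
def fracPairing (N : ℕ) (s p : ℝ) (u v : Euc N → ℝ) : ℝ :=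
  ∫ x, ∫ y, |u x - u y| ^ (p - 2) * (u x - u y) * (v x - v y) / dist x y ^ ((N : ℝ) + s * p)

/-- `u` is a weak solution of `(−Δ)_p^s u = f(x, u)` in `Ω`, `u = 0` in `ℝ^N ∖ Ω`. -/
def IsWeakSolution (N : ℕ) (s p : ℝ) (Ω : Set (Euc N)) (f : Euc N → ℝ → ℝ)
    (u : Euc N → ℝ) : Prop :=
  MemW0 N s p Ω u ∧
  ∀ v, MemW0 N s p Ω v → fracPairing N s p u v = ∫ x in Ω, f x (u x) * v x

/-- `f` is a Carathéodory function on `Ω × ℝ`. -/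
def Caratheodory {N : ℕ} (Ω : Set (Euc N)) (f : Euc N → ℝ → ℝ) : Prop :=
  (∀ t : ℝ, Measurable fun x => f x t) ∧
  ∀ᵐ x ∂((volume : Measure (Euc N)).restrict Ω), Continuous fun t => f x t



private lemma dist_fst_le' {α β : Type*} [SeminormedAddCommGroup α] [SeminormedAddCommGroup β]
    (x y : WithLp 2 (α × β)) : dist x.fst y.fst ≤ dist x y := by
  rw [WithLp.prod_dist_eq_of_L2]
  calc dist x.fst y.fst = Real.sqrt (dist x.fst y.fst ^ 2) := (Real.sqrt_sq dist_nonneg).symm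
    _ ≤ _ := Real.sqrt_le_sqrt (le_add_of_nonneg_right (sq_nonneg _))

private lemma dist_snd_le' {α β : Type*} [SeminormedAddCommGroup α] [SeminormedAddCommGroup β]
    (x y : WithLp 2 (α × β)) : dist x.snd y.snd ≤ dist x y := by
  rw [WithLp.prod_dist_eq_of_L2]
  calc dist x.snd y.snd = Real.sqrt (dist x.snd y.snd ^ 2) := (Real.sqrt_sq dist_nonneg).symm
    _ ≤ _ := Real.sqrt_le_sqrt (le_add_of_nonneg_left (sq_nonneg _))

set_option maxHeartbeats 1000000 in
private lemma chart_density {N : ℕ} (hN : 2 ≤ N) {Ω : Set (Euc N)} (hopen : IsOpen Ω)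
    {x₀ : Euc N} {U : Set (Euc N)} (hU : IsOpen U) (hx₀U : x₀ ∈ U)
    (e : Euc N ≃ᵢ WithLp 2 (EuclideanSpace ℝ (Fin (N - 1)) × ℝ))
    (φ : EuclideanSpace ℝ (Fin (N - 1)) → ℝ) (L : NNReal)
    (hφ : LipschitzWith L φ)
    (hchart : ∀ y ∈ U, (y ∈ Ω ↔ φ ((WithLp.equiv 2 _) (e y)).1 < ((WithLp.equiv 2 _) (e y)).2)) :
    ∃ δ₀ > 0, ∃ c₀ > 0, ∀ z ∈ frontier Ω, z ∈ Metric.ball x₀ δ₀ → ∀ r : ℝ, 0 < r → r ≤ δ₀ →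
      ENNReal.ofReal (c₀ * r ^ N) ≤ volume (Ωᶜ ∩ Metric.ball z r) := by
  haveI : Nonempty (Fin N) := ⟨⟨0, by omega⟩⟩
  haveI : Nontrivial (Euc N) := by
    refine ⟨0, EuclideanSpace.single ⟨0, by omega⟩ (1 : ℝ), fun h => ?_⟩
    have := congr_arg norm h
    rw [norm_zero, EuclideanSpace.norm_single] at this
    norm_num at this
  obtain ⟨ε, hε, hballU⟩ := Metric.isOpen_iff.1 hU x₀ hx₀U
  have hB0 : (0:ℝ≥0∞) < volume (Metric.ball (0:Euc N) 1) := Metric.measure_ball_pos _ _ one_pos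
  have hBt : volume (Metric.ball (0:Euc N) 1) ≠ ⊤ := (MeasureTheory.measure_ball_lt_top).ne
  refine ⟨ε/3, by linarith, ((1:ℝ)/((L:ℝ)+3))^N * (volume (Metric.ball (0:Euc N) 1)).toReal,
    by have := ENNReal.toReal_pos hB0.ne' hBt; positivity, ?_⟩
  intro z hzf hzb r hr hrδ
  have hsub : Metric.ball z r ⊆ U := by
    intro y hy
    apply hballU
    rw [Metric.mem_ball] at *
    have := dist_triangle y z x₀
    linarith
  have hzU : z ∈ U := hsub (Metric.mem_ball_self hr)
  have hzΩ : z ∉ Ω := by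
    rw [hopen.frontier_eq] at hzf
    exact hzf.2
  set w1 := ((WithLp.equiv 2 _) (e z)).1 with hw1
  set w2 := ((WithLp.equiv 2 _) (e z)).2 with hw2
  have hw : w2 ≤ φ w1 := not_lt.1 fun h => hzΩ ((hchart z hzU).2 h)
  set τ := r / ((L:ℝ)+3) with hτdef
  have hτ : 0 < τ := by positivity
  set c' : WithLp 2 (EuclideanSpace ℝ (Fin (N - 1)) × ℝ) :=
    (WithLp.equiv 2 (EuclideanSpace ℝ (Fin (N-1)) × ℝ)).symm (w1, w2 - ((L:ℝ)+2)*τ) with hc'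
  set y₀ := e.symm c' with hy₀
  have hec' : e y₀ = c' := e.apply_symm_apply c'
  have hdcz : dist c' (e z) = ((L:ℝ)+2)*τ := by
    rw [WithLp.prod_dist_eq_of_L2]
    have h1 : dist c'.fst (e z).fst = 0 := by
      simp [hc', dist_self]
      rfl
    have h2 : dist c'.snd (e z).snd = ((L:ℝ)+2)*τ := by
      have : c'.snd = w2 - ((L:ℝ)+2)*τ := rfl
      have h2' : (e z).snd = w2 := rfl
      rw [this, h2', Real.dist_eq]
      rw [abs_of_nonpos (by nlinarith [L.coe_nonneg, hτ])]
      ring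
    rw [h1, h2]
    rw [zero_pow two_ne_zero, zero_add, Real.sqrt_sq (by nlinarith [L.coe_nonneg, hτ])]
  have hsub2 : Metric.ball y₀ τ ⊆ Ωᶜ ∩ Metric.ball z r := by
    intro y hy
    rw [Metric.mem_ball] at hy
    have hdyc : dist (e y) c' < τ := by
      rw [← hec', e.dist_eq]
      exact hy
    have h1 : dist ((WithLp.equiv 2 _) (e y)).1 w1 < τ := by
      refine lt_of_le_of_lt ?_ hdyc
      exact dist_fst_le' (e y) c'
    have h2 : dist ((WithLp.equiv 2 _) (e y)).2 (w2 - ((L:ℝ)+2)*τ) < τ := by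
      refine lt_of_le_of_lt ?_ hdyc
      exact dist_snd_le' (e y) c'
    have hyz : dist y z < r := by
      have : dist (e y) (e z) ≤ dist (e y) c' + dist c' (e z) := dist_triangle _ _ _
      rw [e.dist_eq] at this
      rw [hdcz] at this
      have hτr : τ + ((L:ℝ)+2)*τ = r := by
        have hk : r / ((L:ℝ)+3) * ((L:ℝ)+3) = r := div_mul_cancel₀ r (by positivity)
        rw [hτdef]
        linear_combination hk
      nlinarith
    have hyU : y ∈ U := hsub (Metric.mem_ball.2 hyz)
    refine ⟨?_, Metric.mem_ball.2 hyz⟩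
    intro hyΩ
    have hlt := (hchart y hyU).1 hyΩ
    set v1 := ((WithLp.equiv 2 _) (e y)).1
    set v2 := ((WithLp.equiv 2 _) (e y)).2
    have hφd : dist (φ v1) (φ w1) ≤ (L:ℝ) * τ := by
      calc dist (φ v1) (φ w1) ≤ (L:ℝ) * dist v1 w1 := hφ.dist_le_mul v1 w1
        _ ≤ (L:ℝ) * τ := by
            exact mul_le_mul_of_nonneg_left h1.le L.coe_nonneg
    rw [Real.dist_eq, abs_le] at hφd
    rw [Real.dist_eq, abs_lt] at h2
    have : v2 < w2 - ((L:ℝ)+1)*τ := by cases hφd; cases h2; linarith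
    have : φ v1 ≥ φ w1 - (L:ℝ)*τ := by cases hφd; linarith
    linarith
  calc ENNReal.ofReal (((1:ℝ)/((L:ℝ)+3))^N * (volume (Metric.ball (0:Euc N) 1)).toReal * r ^ N)
      = ENNReal.ofReal (τ ^ N) * volume (Metric.ball (0:Euc N) 1) := by
        have hreq : ((1:ℝ)/((L:ℝ)+3))^N * (volume (Metric.ball (0:Euc N) 1)).toReal * r ^ N
            = τ ^ N * (volume (Metric.ball (0:Euc N) 1)).toReal := by
          rw [hτdef, div_pow]
          ring
        rw [hreq, ENNReal.ofReal_mul (by positivity), ENNReal.ofReal_toReal hBt]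
    _ = volume (Metric.ball y₀ τ) := by
        rw [Measure.addHaar_ball volume y₀ hτ.le, finrank_euclideanSpace_fin]
    _ ≤ volume (Ωᶜ ∩ Metric.ball z r) := measure_mono hsub2

private lemma global_density {N : ℕ} (hN : 2 ≤ N) {Ω : Set (Euc N)}
    (hΩ : IsLipschitzDomain Ω) :
    ∃ δ > 0, ∃ c₀ > 0, ∀ z ∈ frontier Ω, ∀ r : ℝ, 0 < r → r ≤ δ →
      ENNReal.ofReal (c₀ * r ^ N) ≤ volume (Ωᶜ ∩ Metric.ball z r) := by
  obtain ⟨hopen, hconn, hbdd, hch⟩ := hΩ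
  rcases Set.eq_empty_or_nonempty (frontier Ω) with hfe | hfne
  · exact ⟨1, one_pos, 1, one_pos, fun z hz => by rw [hfe] at hz; exact absurd hz (notMem_empty z)⟩
  have hcpt : IsCompact (frontier Ω) :=
    Metric.isCompact_of_isClosed_isBounded isClosed_frontier
      (hbdd.closure.subset frontier_subset_closure)
  have H : ∀ x ∈ frontier Ω, ∃ δ₀ > 0, ∃ c₀ > 0, ∀ z ∈ frontier Ω,
      z ∈ Metric.ball x δ₀ → ∀ r : ℝ, 0 < r → r ≤ δ₀ →
      ENNReal.ofReal (c₀ * r ^ N) ≤ volume (Ωᶜ ∩ Metric.ball z r) := by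
    intro x hx
    obtain ⟨U, hU, hxU, e, φ, L, hφ, hchart⟩ := hch x hx
    exact chart_density hN hopen hU hxU e φ L hφ hchart
  choose! δ₀ hδ₀ c₀ hc₀ hmain using H
  have hcover : frontier Ω ⊆ ⋃ x : ↥(frontier Ω), Metric.ball (x : Euc N) (δ₀ x) := by
    intro z hz
    exact mem_iUnion.2 ⟨⟨z, hz⟩, Metric.mem_ball_self (hδ₀ z hz)⟩
  obtain ⟨t, ht⟩ := hcpt.elim_finite_subcover _ (fun _ => Metric.isOpen_ball) hcover
  have htne : t.Nonempty := by
    obtain ⟨z, hz⟩ := hfne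
    obtain ⟨i, hit, _⟩ := Set.mem_iUnion₂.1 (ht hz)
    exact ⟨i, hit⟩
  refine ⟨t.inf' htne (fun i => δ₀ i), ?_, t.inf' htne (fun i => c₀ i), ?_, ?_⟩
  · exact (Finset.lt_inf'_iff htne).2 fun i hi => hδ₀ i i.2
  · exact (Finset.lt_inf'_iff htne).2 fun i hi => hc₀ i i.2
  · intro z hz r hr hrδ
    obtain ⟨i, hit, hzb⟩ := Set.mem_iUnion₂.1 (ht hz)
    refine le_trans ?_ (hmain i i.2 z hz hzb r hr
      (le_trans hrδ (Finset.inf'_le _ hit)))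
    exact ENNReal.ofReal_le_ofReal
      (mul_le_mul_of_nonneg_right (Finset.inf'_le _ hit) (pow_nonneg hr.le N))

set_option maxHeartbeats 1000000 in
private lemma key_lower {N : ℕ} (hN : 2 ≤ N) {Ω : Set (Euc N)} (hΩ : IsLipschitzDomain Ω) :
    ∃ c > 0, ∀ x ∈ Ω, ENNReal.ofReal (c / rho Ω x) ≤
      ∫⁻ y in Ωᶜ, ENNReal.ofReal (1 / dist x y ^ ((N:ℝ) + 1)) := by
  haveI : Nonempty (Fin N) := ⟨⟨0, by omega⟩⟩
  haveI : Nontrivial (Euc N) := by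
    refine ⟨0, EuclideanSpace.single ⟨0, by omega⟩ (1 : ℝ), fun h => ?_⟩
    have := congr_arg norm h
    rw [norm_zero, EuclideanSpace.norm_single] at this
    norm_num at this
  obtain ⟨δ, hδ, c₀, hc₀, hdens⟩ := global_density hN hΩ
  obtain ⟨hopen, hconn, hbdd, _⟩ := hΩ
  have hfne : (frontier Ω).Nonempty := by
    rw [nonempty_frontier_iff]
    refine ⟨hconn.nonempty, fun h => ?_⟩
    rw [h] at hbdd
    obtain ⟨R, hR⟩ := hbdd.subset_closedBall 0
    have hv : EuclideanSpace.single (⟨0, by omega⟩ : Fin N) (|R|+1) ∈ Metric.closedBall (0 : Euc N) R :=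
      hR (mem_univ _)
    rw [Metric.mem_closedBall, dist_zero_right, EuclideanSpace.norm_single,
      Real.norm_eq_abs, abs_of_nonneg (by positivity)] at hv
    have := le_abs_self R
    linarith
  have hcpt : IsCompact (frontier Ω) :=
    Metric.isCompact_of_isClosed_isBounded isClosed_frontier
      (hbdd.closure.subset frontier_subset_closure)
  obtain ⟨R, hRpos, hRsub⟩ := hbdd.closure.subset_ball_lt 0 0
  have hB0 : (0:ℝ≥0∞) < volume (Metric.ball (0:Euc N) 1) := Metric.measure_ball_pos _ _ one_pos
  have hBt : volume (Metric.ball (0:Euc N) 1) ≠ ⊤ := (MeasureTheory.measure_ball_lt_top).ne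
  have hBT : 0 < (volume (Metric.ball (0:Euc N) 1)).toReal := ENNReal.toReal_pos hB0.ne' hBt
  set BT := (volume (Metric.ball (0:Euc N) 1)).toReal with hBTdef
  set κ : ℝ := (1/(3*R)^(N+1)) * ((R/4)^N * BT) with hκdef
  have hκ : 0 < κ := by positivity
  set c₁ : ℝ := c₀ * 2^N / 3^(N+1) with hc₁def
  have hc₁ : 0 < c₁ := by positivity
  refine ⟨min c₁ (κ * δ / 3), by positivity, ?_⟩
  intro x hxΩ
  have hxball : x ∈ Metric.ball (0 : Euc N) R := hRsub (subset_closure hxΩ)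
  obtain ⟨z, hzf, hzd⟩ := hcpt.exists_infDist_eq_dist hfne x
  have hρz : rho Ω x = dist x z := hzd
  have hzΩ : z ∉ Ω := by rw [hopen.frontier_eq] at hzf; exact hzf.2
  have hρpos : 0 < rho Ω x := by
    rw [hρz, dist_pos]
    intro h
    exact hzΩ (h ▸ hxΩ)
  set ρ := rho Ω x with hρdef
  have step : ∀ (A : Set (Euc N)), MeasurableSet A → A ⊆ Ωᶜ → ∀ M : ℝ, 0 < M →
      (∀ y ∈ A, dist x y ≤ M) →
      ENNReal.ofReal (1 / M ^ ((N:ℝ)+1)) * volume A ≤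
        ∫⁻ y in Ωᶜ, ENNReal.ofReal (1 / dist x y ^ ((N:ℝ)+1)) := by
    intro A hAm hAsub M hM hAd
    calc ENNReal.ofReal (1 / M ^ ((N:ℝ)+1)) * volume A
        = ∫⁻ _ in A, ENNReal.ofReal (1 / M ^ ((N:ℝ)+1)) := (setLIntegral_const _ _).symm
      _ ≤ ∫⁻ y in A, ENNReal.ofReal (1 / dist x y ^ ((N:ℝ)+1)) := by
          refine setLIntegral_mono' hAm fun y hy => ?_
          have hy0 : 0 < dist x y := by
            rw [dist_pos]
            intro h
            exact (hAsub hy) (h ▸ hxΩ)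
          refine ENNReal.ofReal_le_ofReal (one_div_le_one_div_of_le
            (Real.rpow_pos_of_pos hy0 _) ?_)
          exact Real.rpow_le_rpow dist_nonneg (hAd y hy) (by positivity)
      _ ≤ _ := lintegral_mono_set hAsub
  have hpow : ∀ a : ℝ, 0 ≤ a → a ^ ((N:ℝ)+1) = a ^ (N+1 : ℕ) := by
    intro a ha
    rw [← Real.rpow_natCast a (N+1)]
    norm_cast
  by_cases hcase : ρ ≤ δ/3
  · -- near the boundary
    have hvol := hdens z hzf (2*ρ) (by linarith) (by linarith)
    have hAm : MeasurableSet (Ωᶜ ∩ Metric.ball z (2*ρ)) :=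
      (hopen.measurableSet.compl).inter Metric.isOpen_ball.measurableSet
    have hAd : ∀ y ∈ Ωᶜ ∩ Metric.ball z (2*ρ), dist x y ≤ 3*ρ := by
      intro y hy
      have h1 : dist y z < 2*ρ := Metric.mem_ball.1 hy.2
      have h2 : dist x y ≤ dist x z + dist z y := dist_triangle _ _ _
      rw [dist_comm z y] at h2
      rw [hρz] at *
      linarith
    have hstep := step _ hAm inter_subset_left (3*ρ) (by linarith) hAd
    refine le_trans ?_ hstep
    calc ENNReal.ofReal (min c₁ (κ * δ / 3) / ρ)
        ≤ ENNReal.ofReal (1 / (3*ρ) ^ ((N:ℝ)+1) * (c₀ * (2*ρ)^N)) := by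
          refine ENNReal.ofReal_le_ofReal ?_
          rw [hpow _ (by linarith)]
          have heq : 1 / (3*ρ) ^ (N+1 : ℕ) * (c₀ * (2*ρ)^N) = c₁ / ρ := by
            rw [hc₁def]
            field_simp
            ring
          rw [heq]
          gcongr
          exact min_le_left _ _
      _ = ENNReal.ofReal (1 / (3*ρ) ^ ((N:ℝ)+1)) * ENNReal.ofReal (c₀ * (2*ρ)^N) :=
          ENNReal.ofReal_mul (by positivity)
      _ ≤ ENNReal.ofReal (1 / (3*ρ) ^ ((N:ℝ)+1)) * volume (Ωᶜ ∩ Metric.ball z (2*ρ)) :=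
          mul_le_mul_right hvol _
  · -- far from the boundary
    push_neg at hcase
    set A : Set (Euc N) := Metric.closedBall 0 (2*R) \ Metric.closedBall 0 R with hAdef
    have hAm : MeasurableSet A :=
      Metric.isClosed_closedBall.measurableSet.diff Metric.isClosed_closedBall.measurableSet
    have hAsub : A ⊆ Ωᶜ := by
      intro y hy hyΩ
      exact hy.2 (Metric.closedBall_subset_closedBall (by linarith) (Metric.ball_subset_closedBall
        (hRsub (subset_closure hyΩ))))
    have hAd : ∀ y ∈ A, dist x y ≤ 3*R := by
      intro y hy
      have h1 : dist y 0 ≤ 2*R := Metric.mem_closedBall.1 hy.1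
      have h2 : dist x (0:Euc N) < R := Metric.mem_ball.1 hxball
      have h3 : dist x y ≤ dist x 0 + dist (0:Euc N) y := dist_triangle _ _ _
      rw [dist_comm (0:Euc N) y] at h3
      linarith
    set m : Euc N := EuclideanSpace.single (⟨0, by omega⟩ : Fin N) ((3:ℝ)*R/2) with hmdef
    have hm0 : dist m 0 = 3*R/2 := by
      rw [dist_zero_right, hmdef, EuclideanSpace.norm_single, Real.norm_eq_abs,
        abs_of_nonneg (by linarith)]
    have hballA : Metric.ball m (R/4) ⊆ A := by
      intro y hy
      rw [Metric.mem_ball] at hy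
      have hcomm : dist m y = dist y m := dist_comm m y
      have h1 : dist y 0 ≤ dist y m + dist m 0 := dist_triangle _ _ _
      have h2 : dist m 0 ≤ dist m y + dist y 0 := dist_triangle _ _ _
      rw [hm0] at h1 h2
      refine ⟨Metric.mem_closedBall.2 (by linarith), fun hyc => ?_⟩
      rw [Metric.mem_closedBall] at hyc
      linarith [hcomm]
    have hvol : ENNReal.ofReal ((R/4)^N * BT) ≤ volume A := by
      calc ENNReal.ofReal ((R/4)^N * BT)
          = ENNReal.ofReal ((R/4)^N) * volume (Metric.ball (0:Euc N) 1) := by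
            rw [ENNReal.ofReal_mul (by positivity), hBTdef, ENNReal.ofReal_toReal hBt]
        _ = volume (Metric.ball m (R/4)) := by
            rw [Measure.addHaar_ball volume m (by linarith), finrank_euclideanSpace_fin]
        _ ≤ volume A := measure_mono hballA
    have hstep := step A hAm hAsub (3*R) (by linarith) hAd
    refine le_trans ?_ hstep
    calc ENNReal.ofReal (min c₁ (κ * δ / 3) / ρ)
        ≤ ENNReal.ofReal κ := by
          refine ENNReal.ofReal_le_ofReal ?_
          rw [div_le_iff₀ hρpos]
          have h1 : min c₁ (κ * δ / 3) ≤ κ * δ / 3 := min_le_right _ _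
          nlinarith
      _ = ENNReal.ofReal (1 / (3*R) ^ ((N:ℝ)+1)) * ENNReal.ofReal ((R/4)^N * BT) := by
          rw [← ENNReal.ofReal_mul (by positivity), hκdef, hpow _ (by linarith)]
      _ ≤ ENNReal.ofReal (1 / (3*R) ^ ((N:ℝ)+1)) * volume A := mul_le_mul_right hvol _

theorem statement3 {N : ℕ} (hN : 2 ≤ N) {s p : ℝ} (hs0 : 0 < s) (hs1 : s < 1)
    (hp : 1 < p) {Ω : Set (Euc N)} (hΩ : IsLipschitzDomain Ω) (hsp : s * p = 1) :
    ∃ C'' > 0, ∀ u : Euc N → ℝ, MemW0 N s p Ω u →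
      ∫⁻ x in Ω, ENNReal.ofReal (|u x| ^ p / rho Ω x ^ (s * p))
        ≤ ENNReal.ofReal C'' * gagliardoE N s p u := by
  obtain ⟨c, hc, hkey⟩ := key_lower hN hΩ
  have hΩopen : IsOpen Ω := hΩ.1
  refine ⟨1/c, by positivity, ?_⟩
  intro u hu
  obtain ⟨hu1, hu2, hu3⟩ := hu
  set f : Euc N → Euc N → ℝ≥0∞ :=
    fun x y => ENNReal.ofReal (|u x - u y| ^ p / dist x y ^ ((N : ℝ) + s * p)) with hf
  have hAE : ∀ x : Euc N, (∫⁻ y in Ωᶜ, f x y) = ENNReal.ofReal (|u x| ^ p) *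
      ∫⁻ y in Ωᶜ, ENNReal.ofReal (1 / dist x y ^ ((N:ℝ) + 1)) := by
    intro x
    have h1 : ∀ᵐ y ∂(volume.restrict Ωᶜ), f x y =
        ENNReal.ofReal (|u x| ^ p) * ENNReal.ofReal (1 / dist x y ^ ((N:ℝ) + 1)) := by
      filter_upwards [ae_restrict_of_ae hu3, ae_restrict_mem hΩopen.measurableSet.compl]
        with y h0 hmem
      rw [hf]
      simp only
      rw [h0 hmem, sub_zero, hsp, div_eq_mul_inv, ← one_div,
        ENNReal.ofReal_mul (by positivity)]
    rw [lintegral_congr_ae h1, lintegral_const_mul' _ _ ENNReal.ofReal_ne_top]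
  have hpt : ∀ x ∈ Ω, ENNReal.ofReal c * ENNReal.ofReal (|u x| ^ p / rho Ω x ^ (s*p))
      ≤ ∫⁻ y in Ωᶜ, f x y := by
    intro x hx
    rw [hAE x]
    have h1 : rho Ω x ^ (s*p) = rho Ω x := by rw [hsp, Real.rpow_one]
    rw [h1, div_eq_mul_inv, ENNReal.ofReal_mul (by positivity)]
    have h2 : ENNReal.ofReal c * (ENNReal.ofReal (|u x| ^ p) * ENNReal.ofReal (rho Ω x)⁻¹)
        = ENNReal.ofReal (|u x| ^ p) * (ENNReal.ofReal c * ENNReal.ofReal (rho Ω x)⁻¹) := by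
      ring
    rw [h2]
    refine mul_le_mul_right ?_ _
    rw [← ENNReal.ofReal_mul hc.le, ← div_eq_mul_inv]
    exact hkey x hx
  have hmain : ENNReal.ofReal c * ∫⁻ x in Ω, ENNReal.ofReal (|u x| ^ p / rho Ω x ^ (s * p))
      ≤ gagliardoE N s p u := by
    rw [← lintegral_const_mul' _ _ ENNReal.ofReal_ne_top]
    calc ∫⁻ x in Ω, ENNReal.ofReal c * ENNReal.ofReal (|u x| ^ p / rho Ω x ^ (s*p))
        ≤ ∫⁻ x in Ω, ∫⁻ y in Ωᶜ, f x y := setLIntegral_mono' hΩopen.measurableSet hpt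
      _ ≤ ∫⁻ x in Ω, ∫⁻ y, f x y := lintegral_mono fun x => setLIntegral_le_lintegral _ _
      _ ≤ ∫⁻ x, ∫⁻ y, f x y := setLIntegral_le_lintegral _ _
      _ = gagliardoE N s p u := rfl
  have hcne : (ENNReal.ofReal c) ≠ 0 := (ENNReal.ofReal_pos.2 hc).ne'
  have h3 := mul_le_mul_right hmain (ENNReal.ofReal c)⁻¹
  rw [← mul_assoc, ENNReal.inv_mul_cancel hcne ENNReal.ofReal_ne_top, one_mul] at h3
  rw [one_div, ENNReal.ofReal_inv_of_pos hc]
  exact h3
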